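/- Let Ω be a compact metric space, T a homeomorphism of Ω, and A: Ω → GL(2,ℂ) continuous with |det A(ω)| = 1. If the cocycle (T,A) admits an invariant exponential splitting, then it does not admit a Sacker–Sell solution; that is, for every ω ∈ Ω and every unit vector v ∈ ℂ², there exists n ∈ ℤ with ‖Aⁿ(ω)v‖ > 1. -/

import Mathlib

noncomputable section

abbrev E2 := EuclideanSpace ℂ (Fin 2)
abbrev M2 := Matrix (Fin 2) (Fin 2) ℂ

noncomputable def mulV (M : M2) (v : E2) : E2 :=
  Matrix.toEuclideanCLM (𝕜 := ℂ) (n := Fin 2) M v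

variable {Ω : Type*} [MetricSpace Ω]

noncomputable def fwd (T : Ω ≃ₜ Ω) (A : Ω → M2) : ℕ → Ω → M2
  | 0, _ => 1
  | n + 1, ω => fwd T A n (T ω) * A ω

noncomputable def coc (T : Ω ≃ₜ Ω) (A : Ω → M2) (n : ℤ) (ω : Ω) : M2 :=
  if 0 ≤ n then fwd T A n.toNat ω
  else (fwd T A (-n).toNat ((⇑T.symm)^[(-n).toNat] ω))⁻¹

/-- The orthogonal projection onto a (finite-dimensional) subspace `V ⊆ ℂ²`,
viewed as an operator `ℂ² → ℂ²`.  Continuity of `ω ↦ projCLM (Λ ω)` encodes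
continuity of the line field `Λ : Ω → ℂP¹`. -/
noncomputable def projCLM (V : Submodule ℂ E2) : E2 →L[ℂ] E2 :=
  V.subtypeL.comp (V.orthogonalProjectionOnto)

lemma mulV_mul (M N : M2) (v : E2) : mulV (M * N) v = mulV M (mulV N v) := by
  simp [mulV, map_mul]

lemma mulV_one (v : E2) : mulV 1 v = v := by simp [mulV]

lemma mulV_add (M : M2) (u v : E2) : mulV M (u + v) = mulV M u + mulV M v := by
  simp [mulV]

lemma fwd_isUnit (T : Ω ≃ₜ Ω) (A : Ω → M2) (hinv : ∀ ω, IsUnit (A ω)) :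
    ∀ (n : ℕ) (ω : Ω), IsUnit (fwd T A n ω)
  | 0, ω => by simp [fwd]
  | n + 1, ω => (fwd_isUnit T A hinv n (T ω)).mul (hinv ω)

lemma mulV_inv_cancel (M : M2) (h : IsUnit M) (v : E2) : mulV M⁻¹ (mulV M v) = v := by
  rw [← mulV_mul, Matrix.nonsing_inv_mul M ((Matrix.isUnit_iff_isUnit_det M).mp h), mulV_one]

lemma coc_natCast (T : Ω ≃ₜ Ω) (A : Ω → M2) (n : ℕ) (ω : Ω) :
    coc T A (n : ℤ) ω = fwd T A n ω := by
  simp [coc]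

lemma coc_neg_natCast (T : Ω ≃ₜ Ω) (A : Ω → M2) (n : ℕ) (ω : Ω) :
    coc T A (-(n : ℤ)) ω = (fwd T A n ((⇑T.symm)^[n] ω))⁻¹ := by
  rcases Nat.eq_zero_or_pos n with rfl | hn
  · simp [coc, fwd]
  · have h : ¬ (0 ≤ -(n : ℤ)) := by omega
    simp [coc, h, hn.ne']

lemma map_fwd (T : Ω ≃ₜ Ω) (A : Ω → M2) (Λ : Ω → Submodule ℂ E2)
    (hΛ : ∀ ω, Submodule.map
      (Matrix.toEuclideanCLM (𝕜 := ℂ) (n := Fin 2) (A ω)).toLinearMap (Λ ω) = Λ (T ω)) :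
    ∀ (n : ℕ) (ω : Ω), Submodule.map
      (Matrix.toEuclideanCLM (𝕜 := ℂ) (n := Fin 2) (fwd T A n ω)).toLinearMap (Λ ω)
      = Λ ((⇑T)^[n] ω)
  | 0, ω => by
    rw [show fwd T A 0 ω = 1 from rfl]
    have : ((Matrix.toEuclideanCLM (𝕜 := ℂ) (n := Fin 2)) (1 : M2)).toLinearMap = LinearMap.id := by
      rw [map_one]; rfl
    rw [this, Submodule.map_id, Function.iterate_zero_apply]
  | n + 1, ω => by
    have h1 : fwd T A (n+1) ω = fwd T A n (T ω) * A ω := rfl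
    rw [h1, map_mul]
    have h2 : ((Matrix.toEuclideanCLM (𝕜 := ℂ) (n := Fin 2) (fwd T A n (T ω))) *
        (Matrix.toEuclideanCLM (𝕜 := ℂ) (n := Fin 2) (A ω))).toLinearMap =
      (Matrix.toEuclideanCLM (𝕜 := ℂ) (n := Fin 2) (fwd T A n (T ω))).toLinearMap.comp
        (Matrix.toEuclideanCLM (𝕜 := ℂ) (n := Fin 2) (A ω)).toLinearMap := rfl
    rw [h2, Submodule.map_comp, hΛ ω, map_fwd T A Λ hΛ n (T ω),
      ← Function.iterate_succ_apply]

lemma lines_sup_eq_top (Vs Vu : Submodule ℂ E2) (hs : Module.finrank ℂ Vs = 1)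
    (hu : Module.finrank ℂ Vu = 1) (hne : Vs ≠ Vu) : Vs ⊔ Vu = ⊤ := by
  have hE : Module.finrank ℂ E2 = 2 := finrank_euclideanSpace_fin
  have hinf : Vs ⊓ Vu = ⊥ := by
    by_contra h
    have h1 : Module.finrank ℂ (Vs ⊓ Vu : Submodule ℂ E2) ≠ 0 := by
      intro h0
      exact h (Submodule.finrank_eq_zero.mp h0)
    have h2 : Vs ⊓ Vu = Vs := Submodule.eq_of_le_of_finrank_le inf_le_left (by omega)
    have h3 : Vs ≤ Vu := h2 ▸ inf_le_right
    exact hne (Submodule.eq_of_le_of_finrank_le h3 (by omega))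
  have hsum := Submodule.finrank_sup_add_finrank_inf_eq Vs Vu
  rw [hinf, hs, hu] at hsum
  have hbot : Module.finrank ℂ (⊥ : Submodule ℂ E2) = 0 := finrank_bot ℂ E2
  exact Submodule.eq_top_of_finrank_eq (by omega)

/-- an invariant exponential splitting precludes Sacker–Sell
solutions: every unit vector has an iterate of norm `> 1`. -/
theorem splitting_implies_no_SackerSell [CompactSpace Ω]
    (T : Ω ≃ₜ Ω) (A : Ω → M2) (hA : Continuous A)
    (hinv : ∀ ω, IsUnit (A ω)) (hdet : ∀ ω, ‖(A ω).det‖ = 1)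
    (c : ℝ) (hc : 0 < c) (L : ℝ) (hL : 1 < L)
    (Λs Λu : Ω → Submodule ℂ E2)
    (hranks : ∀ ω, Module.finrank ℂ (Λs ω) = 1)
    (hranku : ∀ ω, Module.finrank ℂ (Λu ω) = 1)
    (hconts : Continuous fun ω => projCLM (Λs ω))
    (hcontu : Continuous fun ω => projCLM (Λu ω))
    (hinvs : ∀ ω, Submodule.map
      (Matrix.toEuclideanCLM (𝕜 := ℂ) (n := Fin 2) (A ω)).toLinearMap (Λs ω) = Λs (T ω))
    (hinvu : ∀ ω, Submodule.map
      (Matrix.toEuclideanCLM (𝕜 := ℂ) (n := Fin 2) (A ω)).toLinearMap (Λu ω) = Λu (T ω))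
    (hdecs : ∀ (n : ℕ) (ω : Ω), ∀ v ∈ Λs ω,
      ‖mulV (coc T A n ω) v‖ ≤ c * (L ^ n)⁻¹ * ‖v‖)
    (hdecu : ∀ (n : ℕ) (ω : Ω), ∀ v ∈ Λu ω,
      ‖mulV (coc T A (-(n : ℤ)) ω) v‖ ≤ c * (L ^ n)⁻¹ * ‖v‖)
    (hsep : ∀ ω, Λs ω ≠ Λu ω) :
    ∀ (ω : Ω) (v : E2), ‖v‖ = 1 → ∃ n : ℤ, 1 < ‖mulV (coc T A n ω) v‖ := by
  intro ω v hv
  have hL0 : (0 : ℝ) < L := lt_trans one_pos hL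
  have htop : Λs ω ⊔ Λu ω = ⊤ :=
    lines_sup_eq_top _ _ (hranks ω) (hranku ω) (hsep ω)
  have hvmem : v ∈ Λs ω ⊔ Λu ω := htop ▸ Submodule.mem_top
  obtain ⟨s, hs, u, hu, hsu⟩ := Submodule.mem_sup.mp hvmem
  by_cases hu0 : u = 0
  · -- v = s ∈ Λs ω ; go backwards
    subst hu0
    rw [add_zero] at hsu
    subst hsu
    obtain ⟨n, hn⟩ := pow_unbounded_of_one_lt c hL
    refine ⟨-(n : ℤ), ?_⟩
    rw [coc_neg_natCast]
    set σ := (⇑T.symm)^[n] ω with hσdef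
    have hσ : (⇑T)^[n] σ = ω :=
      (Function.LeftInverse.iterate T.apply_symm_apply n) ω
    have hmap : Submodule.map
        (Matrix.toEuclideanCLM (𝕜 := ℂ) (n := Fin 2) (fwd T A n σ)).toLinearMap (Λs σ)
        = Λs ω := by rw [map_fwd T A Λs hinvs n σ, hσ]
    have hsmem : s ∈ Submodule.map
        (Matrix.toEuclideanCLM (𝕜 := ℂ) (n := Fin 2) (fwd T A n σ)).toLinearMap (Λs σ) :=
      hmap ▸ hs
    obtain ⟨s', hs', hss'⟩ := hsmem
    have hss'' : mulV (fwd T A n σ) s' = s := hss'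
    have hW : mulV (fwd T A n σ)⁻¹ s = s' := by
      rw [← hss'', mulV_inv_cancel _ (fwd_isUnit T A hinv n σ)]
    rw [hW]
    have hdec := hdecs n σ s' hs'
    rw [coc_natCast, hss'', hv] at hdec
    have hLpos : (0 : ℝ) < L ^ n := pow_pos hL0 n
    have hfrac : c * (L ^ n)⁻¹ < 1 := by
      rw [mul_inv_lt_iff₀ hLpos]; simpa using hn
    nlinarith [norm_nonneg s', mul_pos hc (inv_pos.mpr hLpos)]
  · -- u ≠ 0 ; go forwards
    have hu0' : (0 : ℝ) < ‖u‖ := norm_pos_iff.mpr hu0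
    obtain ⟨n, hn⟩ := pow_unbounded_of_one_lt (c * (1 + c * ‖s‖) / ‖u‖) hL
    refine ⟨(n : ℤ), ?_⟩
    rw [coc_natCast, ← hsu, mulV_add]
    have hLpos : (0 : ℝ) < L ^ n := pow_pos hL0 n
    -- stable part bound
    have hdecS := hdecs n ω s hs
    rw [coc_natCast] at hdecS
    have hSb : ‖mulV (fwd T A n ω) s‖ ≤ c * ‖s‖ := by
      refine hdecS.trans ?_
      have h1 : (L ^ n)⁻¹ ≤ 1 := inv_le_one_of_one_le₀ (one_le_pow₀ hL.le)
      have h0 := norm_nonneg s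
      nlinarith [mul_le_mul_of_nonneg_left h1 (mul_nonneg hc.le h0)]
    -- unstable part grows
    set w := mulV (fwd T A n ω) u with hwdef
    have hwmem : w ∈ Λu ((⇑T)^[n] ω) := by
      rw [← map_fwd T A Λu hinvu n ω]
      exact ⟨u, hu, rfl⟩
    have hdecU := hdecu n ((⇑T)^[n] ω) w hwmem
    rw [coc_neg_natCast] at hdecU
    have hback : (⇑T.symm)^[n] ((⇑T)^[n] ω) = ω :=
      (Function.LeftInverse.iterate T.symm_apply_apply n) ω
    rw [hback] at hdecU
    have hWu : mulV (fwd T A n ω)⁻¹ w = u :=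
      mulV_inv_cancel _ (fwd_isUnit T A hinv n ω) u
    rw [hWu] at hdecU
    -- hdecU : ‖u‖ ≤ c * (L ^ n)⁻¹ * ‖w‖
    have hLn : c * (1 + c * ‖s‖) / ‖u‖ < L ^ n := hn
    have hLu : c * (1 + c * ‖s‖) < L ^ n * ‖u‖ := by
      rw [div_lt_iff₀ hu0'] at hLn; linarith
    have hwbig : 1 + c * ‖s‖ < ‖w‖ := by
      have h2 : L ^ n * ‖u‖ ≤ c * ‖w‖ := by
        have := mul_le_mul_of_nonneg_left hdecU hLpos.le
        calc L ^ n * ‖u‖ ≤ L ^ n * (c * (L ^ n)⁻¹ * ‖w‖) := this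
          _ = c * ‖w‖ := by field_simp
      nlinarith
    have htri : ‖w‖ ≤ ‖mulV (fwd T A n ω) s + w‖ + ‖mulV (fwd T A n ω) s‖ := by
      have h := norm_sub_le (mulV (fwd T A n ω) s + w) (mulV (fwd T A n ω) s)
      rwa [add_sub_cancel_left] at h
    linarith

end
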